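/- Let Z = (z_j)_{j≥0} be a Leja sequence on a compact set X ⊂ ℂ, i.e., for each k ≥ 1, |Π_{j<k}(z_k − z_j)| = max_{z∈X} |Π_{j<k}(z − z_j)|. Let λ_{Z_k,2}(z) := (Σ_{j=0}^{k−1} |l_{j,k}(z)|²)^{1/2} be the quadratic Lebesgue function of the first k points, where l_{j,k} are the Lagrange basis polynomials. Then for all k ≥ 1 and z ∈ X: λ_{Z_{k+1},2}(z) ≤ λ_{Z_k,2}(z) + λ_{Z_k,2}(z_k) + 1. -/

import Mathlib

/-- Lagrange basis polynomial of index `j` for the nodes `z 0, …, z (k-1)`. -/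
noncomputable def lag (z : ℕ → ℂ) (j k : ℕ) (x : ℂ) : ℂ :=
  ∏ i ∈ (Finset.range k).erase j, (x - z i) / (z j - z i)

/-- Quadratic Lebesgue function of the first `k` nodes. -/
noncomputable def leb2 (z : ℕ → ℂ) (k : ℕ) (x : ℂ) : ℝ :=
  Real.sqrt (∑ j ∈ Finset.range k, ‖lag z j k x‖ ^ 2)

noncomputable def vecU (z : ℕ → ℂ) (k : ℕ) (x : ℂ) : EuclideanSpace ℂ (Fin (k+1)) :=
  WithLp.toLp 2 (fun i => if (i : ℕ) < k then lag z i k x else 0)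

noncomputable def vecV (z : ℕ → ℂ) (k : ℕ) (x : ℂ) : EuclideanSpace ℂ (Fin (k+1)) :=
  WithLp.toLp 2 (fun i => if (i : ℕ) < k then -(lag z (i : ℕ) k (z k) * lag z k (k+1) x)
           else lag z k (k+1) x)

theorem quadratic_lebesgue_step (X : Set ℂ) (hX : IsCompact X) (z : ℕ → ℂ)
    (hmem : ∀ j, z j ∈ X) (hdist : Function.Injective z)
    (hLeja : ∀ k : ℕ, 1 ≤ k → ∀ x ∈ X,
      ‖∏ j ∈ Finset.range k, (x - z j)‖ ≤
        ‖∏ j ∈ Finset.range k, (z k - z j)‖) :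
    ∀ k : ℕ, 1 ≤ k → ∀ x ∈ X,
      leb2 z (k + 1) x ≤ leb2 z k x + leb2 z k (z k) + 1 := by
  intro k hk x hx
  have hsub : ∀ i j : ℕ, i ≠ j → z i - z j ≠ 0 := fun i j hij =>
    sub_ne_zero.mpr fun h => hij (hdist h)
  have hek : (Finset.range (k+1)).erase k = Finset.range k := by
    rw [Finset.range_add_one, Finset.erase_insert Finset.notMem_range_self]
  have hLprod : lag z k (k+1) x = ∏ i ∈ Finset.range k, (x - z i) / (z k - z i) := by
    rw [lag, hek]
  have hLabs : ‖lag z k (k+1) x‖ ≤ 1 := by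
    rw [hLprod, Finset.prod_div_distrib, norm_div]
    rw [div_le_one]
    · exact hLeja k hk x hx
    · apply norm_pos_iff.mpr
      rw [Finset.prod_ne_zero_iff]
      intro i hi
      exact hsub k i (Nat.ne_of_lt (Finset.mem_range.mp hi)).symm
  have hdecomp : ∀ j, j < k →
      lag z j (k+1) x = lag z j k x - lag z j k (z k) * lag z k (k+1) x := by
    intro j hj
    have hjk : j ≠ k := Nat.ne_of_lt hj
    have hjmem : j ∈ Finset.range k := Finset.mem_range.mpr hj
    have hknot : k ∉ (Finset.range k).erase j := fun h =>
      Finset.notMem_range_self (Finset.mem_of_mem_erase h)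
    have e2 : lag z j (k+1) x = (x - z k)/(z j - z k) * lag z j k x := by
      rw [lag, Finset.range_add_one, Finset.erase_insert_of_ne (Ne.symm hjk),
        Finset.prod_insert hknot]
      rfl
    have e3 : lag z j k (z k) * lag z k (k+1) x
        = (x - z j)/(z k - z j) * lag z j k x := by
      have hL2 : lag z k (k+1) x
          = (x - z j)/(z k - z j) * ∏ i ∈ (Finset.range k).erase j, (x - z i)/(z k - z i) := by
        rw [hLprod]
        exact (Finset.mul_prod_erase _ _ hjmem).symm
      rw [hL2, lag, lag, mul_left_comm, ← Finset.prod_mul_distrib]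
      congr 1
      apply Finset.prod_congr rfl
      intro i hi
      have hik : z k - z i ≠ 0 :=
        hsub k i (Nat.ne_of_lt (Finset.mem_range.mp (Finset.mem_of_mem_erase hi))).symm
      have hij : z j - z i ≠ 0 := hsub j i (Finset.ne_of_mem_erase hi).symm
      field_simp
    rw [e2, e3]
    have h1 : z j - z k ≠ 0 := hsub j k hjk
    have h2 : z k - z j ≠ 0 := hsub k j hjk.symm
    field_simp
    ring
  -- the three norm computations
  have hu : ‖vecU z k x‖ = leb2 z k x := by
    rw [EuclideanSpace.norm_eq, leb2]
    congr 1
    rw [show (∑ j ∈ Finset.range k, ‖lag z j k x‖ ^ 2)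
        = ∑ j ∈ Finset.range (k+1),
            (if j < k then ‖lag z j k x‖ ^ 2 else 0) by
      rw [Finset.sum_range_succ, if_neg (lt_irrefl k), add_zero]
      exact (Finset.sum_congr rfl fun j hj => (if_pos (Finset.mem_range.mp hj)).symm)]
    rw [← Fin.sum_univ_eq_sum_range
      (fun j => if j < k then ‖lag z j k x‖ ^ 2 else 0) (k+1)]
    apply Finset.sum_congr rfl
    intro i _
    by_cases h : (i : ℕ) < k
    · simp [vecU, h]
    · simp [vecU, h]
  have huv : ‖vecU z k x + vecV z k x‖ = leb2 z (k+1) x := by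
    rw [EuclideanSpace.norm_eq, leb2]
    congr 1
    rw [← Fin.sum_univ_eq_sum_range
      (fun j => ‖lag z j (k+1) x‖ ^ 2) (k+1)]
    apply Finset.sum_congr rfl
    intro i _
    have hadd : (vecU z k x + vecV z k x) i = vecU z k x i + vecV z k x i := rfl
    rw [hadd]
    by_cases h : (i : ℕ) < k
    · simp only [vecU, vecV, PiLp.toLp_apply, if_pos h]
      rw [hdecomp i h]
      ring_nf
    · have hik : (i : ℕ) = k := le_antisymm (Nat.lt_succ_iff.mp i.isLt) (not_lt.mp h)
      simp [vecU, vecV, hik]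
  have hS0 : (0:ℝ) ≤ ∑ j ∈ Finset.range k, ‖lag z j k (z k)‖ ^ 2 :=
    Finset.sum_nonneg fun j _ => sq_nonneg _
  have hv : ‖vecV z k x‖ ≤ leb2 z k (z k) + 1 := by
    rw [EuclideanSpace.norm_eq]
    have hsum : (∑ i : Fin (k+1), ‖vecV z k x i‖ ^ 2)
        ≤ (∑ j ∈ Finset.range k, ‖lag z j k (z k)‖ ^ 2) + 1 := by
      rw [show (∑ i : Fin (k+1), ‖vecV z k x i‖ ^ 2)
          = ∑ j ∈ Finset.range (k+1),
              (if j < k then (‖lag z j k (z k)‖ * ‖lag z k (k+1) x‖) ^ 2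
               else ‖lag z k (k+1) x‖ ^ 2) by
        rw [← Fin.sum_univ_eq_sum_range]
        apply Finset.sum_congr rfl
        intro i _
        by_cases h : (i : ℕ) < k
        · simp [vecV, h]
        · simp [vecV, h]]
      rw [Finset.sum_range_succ, if_neg (lt_irrefl k)]
      have h1 : ∀ j ∈ Finset.range k,
          (if j < k then (‖lag z j k (z k)‖ * ‖lag z k (k+1) x‖) ^ 2
           else ‖lag z k (k+1) x‖ ^ 2)
          ≤ ‖lag z j k (z k)‖ ^ 2 := by
        intro j hj
        rw [if_pos (Finset.mem_range.mp hj)]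
        have hl := norm_nonneg (lag z k (k+1) x)
        rw [mul_pow]
        exact mul_le_of_le_one_right (sq_nonneg _) (by nlinarith)
      have h2 : ‖lag z k (k+1) x‖ ^ 2 ≤ 1 := by
        have hl := norm_nonneg (lag z k (k+1) x)
        nlinarith
      have := Finset.sum_le_sum h1
      linarith
    calc Real.sqrt (∑ i : Fin (k+1), ‖vecV z k x i‖ ^ 2)
        ≤ Real.sqrt ((∑ j ∈ Finset.range k, ‖lag z j k (z k)‖ ^ 2) + 1) :=
          Real.sqrt_le_sqrt hsum
      _ ≤ leb2 z k (z k) + 1 := by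
          rw [leb2]
          have hs := Real.sq_sqrt hS0
          have hn := Real.sqrt_nonneg (∑ j ∈ Finset.range k, ‖lag z j k (z k)‖ ^ 2)
          have : (∑ j ∈ Finset.range k, ‖lag z j k (z k)‖ ^ 2) + 1
              ≤ (Real.sqrt (∑ j ∈ Finset.range k, ‖lag z j k (z k)‖ ^ 2) + 1) ^ 2 := by
            nlinarith
          calc Real.sqrt ((∑ j ∈ Finset.range k, ‖lag z j k (z k)‖ ^ 2) + 1)
              ≤ Real.sqrt ((Real.sqrt (∑ j ∈ Finset.range k, ‖lag z j k (z k)‖ ^ 2) + 1) ^ 2) :=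
                Real.sqrt_le_sqrt this
            _ = _ := Real.sqrt_sq (by linarith)
  have key := norm_add_le (vecU z k x) (vecV z k x)
  rw [huv, hu] at key
  linarith
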